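/- Let M, N : I² → I be means with M ≤ N satisfying |M(x,y)−N(x,y)| < |x−y| for x ≠ y, and let Tr(x,y) := x_{ω₁} = y_{ω₁} be the transfinite invariant mean (common value of the transfinite iteration at the first uncountable ordinal). If K : I² → I is a continuous (M,N)-invariant mean, then K = Tr. In particular there is at most one continuous (M,N)-invariant mean. -/

import Mathlib

open Ordinal

def IsMean (I : Set ℝ) (M : ℝ → ℝ → ℝ) : Prop :=
  ∀ x ∈ I, ∀ y ∈ I, M x y ∈ I ∧ min x y ≤ M x y ∧ M x y ≤ max x y

def IsInvariantMean (I : Set ℝ) (M N K : ℝ → ℝ → ℝ) : Prop :=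
  ∀ x ∈ I, ∀ y ∈ I, K x y = K (M x y) (N x y)

/-- The transfinite orbit of `(x,y)` under `(M,N)`: `x₀ = x`, `y₀ = y`,
`x_{α+1} = M(x_α, y_α)`, `y_{α+1} = N(x_α, y_α)`, and at limit ordinals
`x_α = lim_{β↗α} x_β = sup_{1 ≤ β < α} x_β`, `y_α = lim_{β↗α} y_β = inf_{1 ≤ β < α} y_β`
(for `M ≤ N` the sequences are monotone from index `1` on, so these limits are the
suprema/infima of the tails). -/
noncomputable def tOrbit (M N : ℝ → ℝ → ℝ) (x y : ℝ) (o : Ordinal.{0}) : ℝ × ℝ :=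
  Ordinal.limitRecOn o (x, y)
    (fun _ p => (M p.1 p.2, N p.1 p.2))
    (fun α _ ih =>
      (sSup {t : ℝ | ∃ β : Ordinal, ∃ h : β < α, 1 ≤ β ∧ (ih β h).1 = t},
       sInf {t : ℝ | ∃ β : Ordinal, ∃ h : β < α, 1 ≤ β ∧ (ih β h).2 = t}))


/-- The transfinite invariant mean `Tr(x,y) := x_{ω₁} (= y_{ω₁})`. -/
noncomputable def Tr (M N : ℝ → ℝ → ℝ) (x y : ℝ) : ℝ :=
  (tOrbit M N x y ω₁).1

lemma tOrbit_zero (M N : ℝ → ℝ → ℝ) (x y : ℝ) : tOrbit M N x y 0 = (x, y) :=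
  Ordinal.limitRecOn_zero _ _ _

lemma tOrbit_succ (M N : ℝ → ℝ → ℝ) (x y : ℝ) (α : Ordinal.{0}) :
    tOrbit M N x y (Order.succ α) =
      (M (tOrbit M N x y α).1 (tOrbit M N x y α).2,
       N (tOrbit M N x y α).1 (tOrbit M N x y α).2) :=
  Ordinal.limitRecOn_succ _ _ _ _

lemma tOrbit_limit (M N : ℝ → ℝ → ℝ) (x y : ℝ) (α : Ordinal.{0}) (hα : Order.IsSuccLimit α) :
    tOrbit M N x y α =
      (sSup {t : ℝ | ∃ β : Ordinal, ∃ _ : β < α, 1 ≤ β ∧ (tOrbit M N x y β).1 = t},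
       sInf {t : ℝ | ∃ β : Ordinal, ∃ _ : β < α, 1 ≤ β ∧ (tOrbit M N x y β).2 = t}) :=
  Ordinal.limitRecOn_limit _ _ _ _ hα

/-- every continuous `(M,N)`-invariant mean coincides with the
transfinite invariant mean `Tr`; in particular there is at most one continuous
`(M,N)`-invariant mean. -/
theorem stmt12 (I : Set ℝ) (hI : I.OrdConnected) (M N : ℝ → ℝ → ℝ)
    (hM : IsMean I M) (hN : IsMean I N)
    (hMN : ∀ x ∈ I, ∀ y ∈ I, M x y ≤ N x y)
    (hcontr : ∀ x ∈ I, ∀ y ∈ I, x ≠ y → |M x y - N x y| < |x - y|)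
    (K : ℝ → ℝ → ℝ) (hK : IsMean I K) (hKinv : IsInvariantMean I M N K)
    (hKcont : ContinuousOn (fun p : ℝ × ℝ => K p.1 p.2) (I ×ˢ I)) :
    ∀ x ∈ I, ∀ y ∈ I, K x y = Tr M N x y := by
  intro x hx y hy
  set f : Ordinal.{0} → ℝ := fun α => (tOrbit M N x y α).1 with hfdef
  set g : Ordinal.{0} → ℝ := fun α => (tOrbit M N x y α).2 with hgdef
  have hf0 : f 0 = x := by simp [hfdef, tOrbit_zero]
  have hg0 : g 0 = y := by simp [hgdef, tOrbit_zero]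
  have hfs : ∀ α, f (Order.succ α) = M (f α) (g α) := by
    intro α; exact congrArg Prod.fst (tOrbit_succ M N x y α)
  have hgs : ∀ α, g (Order.succ α) = N (f α) (g α) := by
    intro α; exact congrArg Prod.snd (tOrbit_succ M N x y α)
  have hfl : ∀ α, Order.IsSuccLimit α →
      f α = sSup {t : ℝ | ∃ β : Ordinal, ∃ _ : β < α, 1 ≤ β ∧ f β = t} := by
    intro α hα; simp [hfdef, tOrbit_limit M N x y α hα]
  have hgl : ∀ α, Order.IsSuccLimit α →
      g α = sInf {t : ℝ | ∃ β : Ordinal, ∃ _ : β < α, 1 ≤ β ∧ g β = t} := by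
    intro α hα; simp [hgdef, tOrbit_limit M N x y α hα]
  -- main transfinite induction
  have main : ∀ α : Ordinal.{0}, f α ∈ I ∧ g α ∈ I ∧
      (∀ β, 1 ≤ β → β ≤ α → f β ≤ f α ∧ g α ≤ g β) ∧
      (1 ≤ α → f α ≤ g α) ∧ K (f α) (g α) = K x y := by
    intro α
    induction α using Ordinal.induction with
    | _ α IH =>
      rcases Ordinal.zero_or_succ_or_isSuccLimit α with h0 | ⟨γ, rfl⟩ | hlim
      · subst h0
        refine ⟨by rwa [hf0], by rwa [hg0], ?_, ?_, by rw [hf0, hg0]⟩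
        · intro β h1 h2
          exact absurd (h1.trans h2) (by simp)
        · intro h1
          exact absurd h1 (by simp)
      · -- successor case
        obtain ⟨hfγ, hgγ, hmono, hfg, hKγ⟩ := IH γ (Order.lt_succ γ)
        have hfsγ := hfs γ; have hgsγ := hgs γ
        have hMem := hM (f γ) hfγ (g γ) hgγ
        have hNem := hN (f γ) hfγ (g γ) hgγ
        have hfg' : f (Order.succ γ) ≤ g (Order.succ γ) := by
          rw [hfsγ, hgsγ]; exact hMN _ hfγ _ hgγ
        refine ⟨by rw [hfsγ]; exact hMem.1, by rw [hgsγ]; exact hNem.1, ?_, fun _ => hfg', ?_⟩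
        · intro β h1 h2
          rcases eq_or_lt_of_le h2 with rfl | hlt
          · exact ⟨le_refl _, le_refl _⟩
          · have hβγ : β ≤ γ := Order.lt_succ_iff.mp hlt
            have h1γ : (1 : Ordinal) ≤ γ := h1.trans hβγ
            have hfgγ : f γ ≤ g γ := hfg h1γ
            have h3 := hmono β h1 hβγ
            constructor
            · refine h3.1.trans ?_
              rw [hfsγ]
              have := hMem.2.1
              rwa [min_eq_left hfgγ] at this
            · refine le_trans ?_ h3.2
              rw [hgsγ]
              have := hNem.2.2
              rwa [max_eq_right hfgγ] at this
        · rw [hfsγ, hgsγ]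
          exact (hKinv (f γ) hfγ (g γ) hgγ).symm.trans hKγ
      · -- limit case
        have h1α : (1 : Ordinal) < α := Ordinal.one_lt_of_isSuccLimit hlim
        obtain ⟨hf1, hg1, _, hfg1, _⟩ := IH 1 h1α
        set Sf := {t : ℝ | ∃ β : Ordinal, ∃ _ : β < α, 1 ≤ β ∧ f β = t} with hSf
        set Sg := {t : ℝ | ∃ β : Ordinal, ∃ _ : β < α, 1 ≤ β ∧ g β = t} with hSg
        have hfα := hfl α hlim
        have hgα := hgl α hlim
        have hSfne : Sf.Nonempty := ⟨f 1, 1, h1α, le_refl _, rfl⟩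
        have hSgne : Sg.Nonempty := ⟨g 1, 1, h1α, le_refl _, rfl⟩
        have hSfub : ∀ t ∈ Sf, t ≤ g 1 := by
          rintro t ⟨β, hβ, h1β, rfl⟩
          obtain ⟨_, _, hm, hfgβ, _⟩ := IH β hβ
          exact (hfgβ h1β).trans (hm 1 (le_refl _) h1β).2
        have hSglb : ∀ t ∈ Sg, f 1 ≤ t := by
          rintro t ⟨β, hβ, h1β, rfl⟩
          obtain ⟨_, _, hm, hfgβ, _⟩ := IH β hβ
          exact ((hm 1 (le_refl _) h1β).1).trans (hfgβ h1β)
        have hSfbdd : BddAbove Sf := ⟨g 1, hSfub⟩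
        have hSgbdd : BddBelow Sg := ⟨f 1, hSglb⟩
        have hcross : ∀ s ∈ Sf, ∀ t ∈ Sg, s ≤ t := by
          rintro s ⟨β, hβ, h1β, rfl⟩ t ⟨β', hβ', h1β', rfl⟩
          set δ := max β β' with hδ
          have hδα : δ < α := max_lt hβ hβ'
          obtain ⟨_, _, hm, hfgδ, _⟩ := IH δ hδα
          have h1δ : (1 : Ordinal) ≤ δ := h1β.trans (le_max_left _ _)
          calc f β ≤ f δ := (hm β h1β (le_max_left _ _)).1
            _ ≤ g δ := hfgδ h1δ
            _ ≤ g β' := (hm β' h1β' (le_max_right _ _)).2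
        have hf1le : f 1 ≤ f α := by
          rw [hfα]; exact le_csSup hSfbdd ⟨1, h1α, le_refl _, rfl⟩
        have hfleg1 : f α ≤ g 1 := by
          rw [hfα]; exact csSup_le hSfne hSfub
        have hg1ge : g α ≤ g 1 := by
          rw [hgα]; exact csInf_le hSgbdd ⟨1, h1α, le_refl _, rfl⟩
        have hgef1 : f 1 ≤ g α := by
          rw [hgα]; exact le_csInf hSgne hSglb
        have hfαI : f α ∈ I := hI.out hf1 hg1 ⟨hf1le, hfleg1⟩
        have hgαI : g α ∈ I := hI.out hf1 hg1 ⟨hgef1, hg1ge⟩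
        have hfgα : f α ≤ g α := by
          rw [hfα, hgα]
          exact csSup_le hSfne fun s hs => le_csInf hSgne fun t ht => hcross s hs t ht
        have hmonoα : ∀ β, 1 ≤ β → β ≤ α → f β ≤ f α ∧ g α ≤ g β := by
          intro β h1 h2
          rcases eq_or_lt_of_le h2 with rfl | hlt
          · exact ⟨le_refl _, le_refl _⟩
          · constructor
            · rw [hfα]; exact le_csSup hSfbdd ⟨β, hlt, h1, rfl⟩
            · rw [hgα]; exact csInf_le hSgbdd ⟨β, hlt, h1, rfl⟩
        refine ⟨hfαI, hgαI, hmonoα, fun _ => hfgα, ?_⟩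
        -- continuity argument
        have hmemP : ((f α, g α) : ℝ × ℝ) ∈ I ×ˢ I := ⟨hfαI, hgαI⟩
        have hcw := hKcont _ hmemP
        rw [Metric.continuousWithinAt_iff] at hcw
        refine (eq_of_forall_dist_le fun ε hε => ?_).symm
        obtain ⟨δ, hδ, hcw⟩ := hcw ε hε
        have hδ2 : 0 < δ / 2 := by linarith
        obtain ⟨s, hsmem, hs⟩ : ∃ s ∈ Sf, f α - δ / 2 < s := by
          apply exists_lt_of_lt_csSup hSfne
          rw [← hfα]; linarith
        obtain ⟨t, htmem, ht⟩ : ∃ t ∈ Sg, t < g α + δ / 2 := by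
          apply exists_lt_of_csInf_lt hSgne
          rw [← hgα]; linarith
        obtain ⟨β₁, hβ₁, h1β₁, rfl⟩ := hsmem
        obtain ⟨β₂, hβ₂, h1β₂, rfl⟩ := htmem
        set δ₀ := max β₁ β₂ with hδ₀
        have hδ₀α : δ₀ < α := max_lt hβ₁ hβ₂
        obtain ⟨hfI₀, hgI₀, hm₀, _, hK₀⟩ := IH δ₀ hδ₀α
        have h1δ₀ : (1 : Ordinal) ≤ δ₀ := h1β₁.trans (le_max_left _ _)
        have hfub : f δ₀ ≤ f α := (hmonoα δ₀ h1δ₀ hδ₀α.le).1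
        have hglb : g α ≤ g δ₀ := (hmonoα δ₀ h1δ₀ hδ₀α.le).2
        have hflb : f α - δ / 2 < f δ₀ := lt_of_lt_of_le hs (hm₀ β₁ h1β₁ (le_max_left _ _)).1
        have hgub : g δ₀ < g α + δ / 2 := lt_of_le_of_lt (hm₀ β₂ h1β₂ (le_max_right _ _)).2 ht
        have hdist : dist ((f δ₀, g δ₀) : ℝ × ℝ) (f α, g α) < δ := by
          rw [Prod.dist_eq]
          apply max_lt
          · rw [Real.dist_eq, abs_lt]; constructor <;> linarith
          · rw [Real.dist_eq, abs_lt]; constructor <;> linarith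
        have := hcw (show ((f δ₀, g δ₀) : ℝ × ℝ) ∈ I ×ˢ I from ⟨hfI₀, hgI₀⟩) hdist
        simp only at this
        rw [hK₀] at this
        exact this.le
  -- now analyze the orbit at ω₁
  have hLω : Order.IsSuccLimit (ω₁ : Ordinal.{0}) := Cardinal.isSuccLimit_omega 1
  obtain ⟨hfωI, hgωI, hmonoω, hfgω, hKω⟩ := main ω₁
  set u := f ω₁ with hu
  set v := g ω₁ with hv
  -- find γ < ω₁ where the orbit stabilizes
  have hfωeq := hfl ω₁ hLω
  have hgωeq := hgl ω₁ hLω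
  have hSfne : {t : ℝ | ∃ β : Ordinal, ∃ _ : β < ω₁, 1 ≤ β ∧ f β = t}.Nonempty :=
    ⟨f 1, 1, Ordinal.one_lt_of_isSuccLimit hLω, le_refl _, rfl⟩
  have hSgne : {t : ℝ | ∃ β : Ordinal, ∃ _ : β < ω₁, 1 ≤ β ∧ g β = t}.Nonempty :=
    ⟨g 1, 1, Ordinal.one_lt_of_isSuccLimit hLω, le_refl _, rfl⟩
  have hexf : ∀ n : ℕ, ∃ β : Ordinal, β < ω₁ ∧ 1 ≤ β ∧ u - 1 / (n + 1) < f β := by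
    intro n
    have hpos : (0 : ℝ) < 1 / (n + 1) := by positivity
    have : u - 1 / (n + 1) < sSup {t : ℝ | ∃ β : Ordinal, ∃ _ : β < ω₁, 1 ≤ β ∧ f β = t} := by
      rw [← hfωeq]; linarith
    obtain ⟨s, ⟨β, hβ, h1β, rfl⟩, hs⟩ := exists_lt_of_lt_csSup hSfne this
    exact ⟨β, hβ, h1β, hs⟩
  have hexg : ∀ n : ℕ, ∃ β : Ordinal, β < ω₁ ∧ 1 ≤ β ∧ g β < v + 1 / (n + 1) := by
    intro n
    have hpos : (0 : ℝ) < 1 / (n + 1) := by positivity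
    have : sInf {t : ℝ | ∃ β : Ordinal, ∃ _ : β < ω₁, 1 ≤ β ∧ g β = t} < v + 1 / (n + 1) := by
      rw [← hgωeq]; linarith
    obtain ⟨s, ⟨β, hβ, h1β, rfl⟩, hs⟩ := exists_lt_of_csInf_lt hSgne this
    exact ⟨β, hβ, h1β, hs⟩
  choose βf hβf1 hβf2 hβf3 using hexf
  choose βg hβg1 hβg2 hβg3 using hexg
  have hsupf : iSup βf < ω₁ := by
    exact Ordinal.iSup_lt_omega_one hβf1
  have hsupg : iSup βg < ω₁ := by
    exact Ordinal.iSup_lt_omega_one hβg1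
  set γ := max (iSup βf) (iSup βg) with hγdef
  have hγω : γ < ω₁ := max_lt hsupf hsupg
  have h1γ : (1 : Ordinal) ≤ γ :=
    (hβf2 0).trans ((Ordinal.le_iSup βf 0).trans (le_max_left _ _))
  obtain ⟨hfγI, hgγI, hmγ, hfgγ, _⟩ := main γ
  -- f γ = u
  have hfγu : f γ = u := by
    have hle : f γ ≤ u := (hmonoω γ h1γ hγω.le).1
    have hge : u ≤ f γ := by
      by_contra hlt
      push_neg at hlt
      obtain ⟨n, hn⟩ := exists_nat_one_div_lt (show (0:ℝ) < u - f γ by linarith)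
      have h1 : f (βf n) ≤ f γ :=
        (hmγ (βf n) (hβf2 n) ((Ordinal.le_iSup βf n).trans (le_max_left _ _))).1
      have h2 := hβf3 n
      linarith
    linarith
  have hgγv : g γ = v := by
    have hge : v ≤ g γ := (hmonoω γ h1γ hγω.le).2
    have hle : g γ ≤ v := by
      by_contra hlt
      push_neg at hlt
      obtain ⟨n, hn⟩ := exists_nat_one_div_lt (show (0:ℝ) < g γ - v by linarith)
      have h1 : g γ ≤ g (βg n) :=
        (hmγ (βg n) (hβg2 n) ((Ordinal.le_iSup βg n).trans (le_max_right _ _))).2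
      have h2 := hβg3 n
      linarith
    linarith
  have huI : u ∈ I := by rw [← hfγu]; exact hfγI
  have hvI : v ∈ I := by rw [← hgγv]; exact hgγI
  have huv : u ≤ v := hfgω (le_of_lt (Ordinal.one_lt_of_isSuccLimit hLω))
  -- fixed point: M u v = u, N u v = v
  have hsγω : Order.succ γ < ω₁ := hLω.succ_lt hγω
  have hMuv : M u v = u := by
    have h1 : f (Order.succ γ) = M u v := by rw [hfs γ, hfγu, hgγv]
    have hle : M u v ≤ u := by
      rw [← h1]
      exact (hmonoω (Order.succ γ) (h1γ.trans (Order.le_succ γ)) hsγω.le).1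
    have hge : u ≤ M u v := by
      have := (hM u huI v hvI).2.1
      rwa [min_eq_left huv] at this
    linarith
  have hNuv : N u v = v := by
    have h1 : g (Order.succ γ) = N u v := by rw [hgs γ, hfγu, hgγv]
    have hge : v ≤ N u v := by
      rw [← h1]
      exact (hmonoω (Order.succ γ) (h1γ.trans (Order.le_succ γ)) hsγω.le).2
    have hle : N u v ≤ v := by
      have := (hN u huI v hvI).2.2
      rwa [max_eq_right huv] at this
    linarith
  -- contraction forces u = v
  have huveq : u = v := by
    by_contra hne
    have := hcontr u huI v hvI hne
    rw [hMuv, hNuv] at this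
    exact absurd this (lt_irrefl _)
  -- conclude
  have hKuu : K u u = u := by
    obtain ⟨_, h1, h2⟩ := hK u huI u huI
    rw [min_self] at h1; rw [max_self] at h2
    linarith
  have hTr : Tr M N x y = u := rfl
  rw [hTr, ← hKω, huveq]
  rw [← huveq]
  exact huveq ▸ hKuu
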